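/- The mean μ = E[X] of the GLL distribution satisfies μ = (θ/(1+θ))^(2+p)·(1+p+λ(1+θ))/(1+p+λθ), and for fixed θ > 0 and p ≥ 0, as λ → ∞, μ converges to (θ/(1+θ))^(1+p). -/

import Mathlib

open Real MeasureTheory Filter Set

/-- The generalized Log-Lindley (GLL) density. -/
noncomputable def gll (θ lam p x : ℝ) : ℝ :=
  θ ^ (2 + p) / (Real.Gamma (1 + p) * (1 + p + lam * θ)) *
    (-Real.log x) ^ p * (lam - Real.log x) * x ^ (θ - 1)

lemma exp_neg_image : (fun t : ℝ => Real.exp (-t)) '' Set.Ioi 0 = Set.Ioo (0:ℝ) 1 := by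
  ext y
  constructor
  · rintro ⟨t, ht, rfl⟩
    exact ⟨Real.exp_pos _, by simpa using Real.exp_lt_exp.2 (neg_neg_iff_pos.2 ht)⟩
  · rintro ⟨hy0, hy1⟩
    exact ⟨-Real.log y, by simpa using Real.log_neg hy0 hy1, by simp [Real.exp_log hy0]⟩

lemma exp_neg_deriv : ∀ t ∈ Set.Ioi (0:ℝ),
    HasDerivWithinAt (fun t : ℝ => Real.exp (-t)) (-Real.exp (-t)) (Set.Ioi 0) t := by
  intro t _
  have := ((Real.hasDerivAt_exp (-t)).comp t (hasDerivAt_neg t))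
  have h2 := this.hasDerivWithinAt (s := Set.Ioi 0)
  simp only [mul_neg, mul_one] at h2
  exact h2

lemma exp_neg_inj : Set.InjOn (fun t : ℝ => Real.exp (-t)) (Set.Ioi 0) := by
  intro a _ b _ h
  have := Real.exp_injective h
  linarith [neg_injective this]

lemma integrand_eq (q r : ℝ) :
    ∀ t ∈ Set.Ioi (0:ℝ),
      |(-Real.exp (-t))| • ((-Real.log (Real.exp (-t))) ^ q * (Real.exp (-t)) ^ (r - 1))
        = t ^ ((q + 1) - 1) * Real.exp (-(r * t)) := by
  intro t _
  have h1 : (Real.exp (-t)) ^ (r - 1) = Real.exp (-t * (r - 1)) := by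
    rw [Real.rpow_def_of_pos (Real.exp_pos _), Real.log_exp]
  rw [abs_neg, abs_of_pos (Real.exp_pos _), Real.log_exp, neg_neg, smul_eq_mul, h1,
    mul_comm (Real.exp (-t)), mul_assoc, ← Real.exp_add, show (q + 1) - 1 = q by ring]
  congr 2
  ring

lemma key_integrable (q r : ℝ) (hq : 0 ≤ q) (hr : 0 < r) :
    IntegrableOn (fun x => (-Real.log x) ^ q * x ^ (r - 1)) (Set.Ioo (0:ℝ) 1) := by
  rw [← exp_neg_image,
    integrableOn_image_iff_integrableOn_abs_deriv_smul measurableSet_Ioi exp_neg_deriv exp_neg_inj]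
  have : IntegrableOn (fun t : ℝ => t ^ q * Real.exp (-r * t ^ (1:ℝ))) (Set.Ioi 0) :=
    integrableOn_rpow_mul_exp_neg_mul_rpow (by linarith) zero_lt_one hr
  refine (this.congr_fun ?_ measurableSet_Ioi)
  intro t ht
  have := integrand_eq q r t ht
  simp only [add_sub_cancel_right] at this
  simp only [Real.rpow_one, neg_mul]
  exact this.symm

lemma key_integral (q r : ℝ) (hq : 0 ≤ q) (hr : 0 < r) :
    ∫ x in Set.Ioo (0:ℝ) 1, (-Real.log x) ^ q * x ^ (r - 1)
      = (1 / r) ^ (q + 1) * Real.Gamma (q + 1) := by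
  rw [← exp_neg_image,
    integral_image_eq_integral_abs_deriv_smul measurableSet_Ioi exp_neg_deriv exp_neg_inj,
    setIntegral_congr_fun measurableSet_Ioi (integrand_eq q r),
    Real.integral_rpow_mul_exp_neg_mul_Ioi (by linarith) hr]

theorem gll_mean_and_limit (θ p : ℝ) (hθ : 0 < θ) (hp : 0 ≤ p) :
    (∀ lam : ℝ, 0 ≤ lam →
      ∫ x in Set.Ioo (0:ℝ) 1, x * gll θ lam p x =
        (θ / (1 + θ)) ^ (2 + p) * (1 + p + lam * (1 + θ)) / (1 + p + lam * θ)) ∧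
    Tendsto (fun lam => ∫ x in Set.Ioo (0:ℝ) 1, x * gll θ lam p x) atTop
      (nhds ((θ / (1 + θ)) ^ (1 + p))) := by
  have hb : (0:ℝ) < 1 + θ := by linarith
  have hG : 0 < Real.Gamma (1 + p) := Real.Gamma_pos_of_pos (by linarith)
  have key : ∀ lam : ℝ, 0 ≤ lam →
      ∫ x in Set.Ioo (0:ℝ) 1, x * gll θ lam p x =
        (θ / (1 + θ)) ^ (2 + p) * (1 + p + lam * (1 + θ)) / (1 + p + lam * θ) := by
    intro lam hlam
    have hD : (0:ℝ) < 1 + p + lam * θ := by positivity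
    set C : ℝ := θ ^ (2 + p) / (Real.Gamma (1 + p) * (1 + p + lam * θ)) with hC
    have hint : ∀ x ∈ Set.Ioo (0:ℝ) 1,
        x * gll θ lam p x =
          (C * lam) * ((-Real.log x) ^ p * x ^ ((1 + θ) - 1))
            + C * ((-Real.log x) ^ (p + 1) * x ^ ((1 + θ) - 1)) := by
      intro x hx
      have hx0 : 0 < x := hx.1
      have hlx : 0 < -Real.log x := by simpa using Real.log_neg hx.1 hx.2
      have h1 : x ^ ((1 + θ) - 1) = x ^ (θ - 1) * x := by
        rw [← Real.rpow_add_one hx0.ne' (θ - 1)]; ring_nf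
      have h2 : (-Real.log x) ^ (p + 1) = (-Real.log x) ^ p * (-Real.log x) := by
        rw [Real.rpow_add_one hlx.ne' p]
      rw [gll, h1, h2]
      ring
    rw [setIntegral_congr_fun measurableSet_Ioo hint,
      integral_add (((key_integrable p (1 + θ) hp hb).const_mul _))
        (((key_integrable (p + 1) (1 + θ) (by linarith) hb).const_mul _)),
      integral_const_mul, integral_const_mul, key_integral p (1 + θ) hp hb,
      key_integral (p + 1) (1 + θ) (by linarith) hb]
    have hGam : Real.Gamma (p + 1 + 1) = (p + 1) * Real.Gamma (p + 1) :=
      Real.Gamma_add_one (by linarith)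
    have hG' : Real.Gamma (p + 1) = Real.Gamma (1 + p) := by rw [add_comm]
    have hrw2 : (1 / (1 + θ)) ^ (p + 1 + 1) = (1 / (1 + θ)) ^ (p + 1) * (1 / (1 + θ)) := by
      rw [Real.rpow_add_one (by positivity : (1:ℝ)/(1+θ) ≠ 0) (p + 1)]
    have hrw3 : (θ / (1 + θ)) ^ (2 + p) = θ ^ (2 + p) * (1 / (1 + θ)) ^ (p + 1) * (1 / (1 + θ)) := by
      rw [Real.div_rpow hθ.le hb.le, show (2 + p) = (p + 1) + 1 by ring,
        Real.rpow_add_one hb.ne' (p + 1), one_div, Real.inv_rpow hb.le]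
      field_simp
    rw [hGam, hG', hrw2, hrw3, hC]
    field_simp
    ring
  refine ⟨key, ?_⟩
  have hq : Tendsto (fun lam : ℝ => (1 + p + lam * (1 + θ)) / (1 + p + lam * θ)) atTop
      (nhds ((1 + θ) / θ)) := by
    have h1 : Tendsto (fun lam : ℝ => (1 + p) / lam + (1 + θ)) atTop (nhds (1 + θ)) := by
      simpa using (tendsto_const_nhds.div_atTop tendsto_id).add
        (tendsto_const_nhds : Tendsto (fun _ : ℝ => (1 + θ)) atTop _)
    have h2 : Tendsto (fun lam : ℝ => (1 + p) / lam + θ) atTop (nhds θ) := by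
      simpa using (tendsto_const_nhds.div_atTop tendsto_id).add
        (tendsto_const_nhds : Tendsto (fun _ : ℝ => θ) atTop _)
    refine (h1.div h2 hθ.ne').congr' ?_
    filter_upwards [eventually_gt_atTop (0:ℝ)] with lam hlam
    have hD : (0:ℝ) < 1 + p + lam * θ := by positivity
    show ((1 + p) / lam + (1 + θ)) / ((1 + p) / lam + θ) = _
    have hl : lam ≠ 0 := hlam.ne'
    rw [div_add' _ _ _ hl, div_add' _ _ _ hl, div_div_div_cancel_right₀ hl]
    ring_nf
  have hlim : Tendsto (fun lam : ℝ =>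
      (θ / (1 + θ)) ^ (2 + p) * (1 + p + lam * (1 + θ)) / (1 + p + lam * θ)) atTop
      (nhds ((θ / (1 + θ)) ^ (1 + p))) := by
    have := hq.const_mul ((θ / (1 + θ)) ^ (2 + p))
    have heq : (θ / (1 + θ)) ^ (2 + p) * ((1 + θ) / θ) = (θ / (1 + θ)) ^ (1 + p) := by
      rw [show (2 + p) = (1 + p) + 1 by ring,
        Real.rpow_add_one (by positivity : θ/(1+θ) ≠ 0) (1 + p)]
      field_simp
    rw [heq] at this
    refine this.congr fun lam => by ring
  refine hlim.congr' ?_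
  filter_upwards [eventually_ge_atTop (0:ℝ)] with lam hlam
  exact (key lam hlam).symm
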